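/- Rewiring preserves correctness through a connected retarget: let f be a linking on a sequent, l a negative I-labelled leaf, and suppose the targets t₁ = f(l) and t₂ of a proposed retarget are connected by a path of f-edges not through l; then the leaf function f' obtained from f by setting f'(l) = t₂ also satisfies the switching criterion. In particular, retargeting the edge from l along the path in f starting at a negative leaf l⁻ to the positive leaf at its end preserves correctness. -/

import Mathlib

attribute [local instance] Classical.propDecidable

namespace Nets

/-- A star-autonomous shape over a type `A` of generators: an expression built
from generators and the unit `I` by binary tensor and unary dual. -/
inductive Shape (A : Type) : Type where
  | gen : A → Shape A
  | unit : Shape A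
  | tensor : Shape A → Shape A → Shape A
  | dual : Shape A → Shape A

/-- A vertex of the parse tree of a shape. -/
inductive Vtx {A : Type} : Shape A → Type where
  | root (S : Shape A) : Vtx S
  | tleft {S T : Shape A} : Vtx S → Vtx (Shape.tensor S T)
  | tright {S T : Shape A} : Vtx T → Vtx (Shape.tensor S T)
  | dchild {S : Shape A} : Vtx S → Vtx (Shape.dual S)

namespace Shape

variable {A : Type}

/-- The sign of a vertex: `true` (positive) iff it is under an even number of duals. -/
def vsign : {S : Shape A} → Vtx S → Bool
  | _, .root _ => true
  | _, .tleft v => vsign v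
  | _, .tright v => vsign v
  | _, .dchild v => !vsign v

/-- The subshape rooted at a vertex. -/
def subtreeAt : {S : Shape A} → Vtx S → Shape A
  | S, .root _ => S
  | _, .tleft v => subtreeAt v
  | _, .tright v => subtreeAt v
  | _, .dchild v => subtreeAt v

/-- Atoms: generators and the unit. -/
def IsAtom : Shape A → Prop
  | gen _ => True
  | unit => True
  | _ => False

def IsTensorSh : Shape A → Prop
  | tensor _ _ => True
  | _ => False

/-- The generator labelling a shape, if any. -/
def lblSh : Shape A → Option A
  | gen a => some a
  | _ => none

/-- The parent of a vertex in the parse tree (none at the root). -/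
def parent : {S : Shape A} → Vtx S → Option (Vtx S)
  | _, .root _ => none
  | _, .tleft v => some (match parent v with | none => .root _ | some p => .tleft p)
  | _, .tright v => some (match parent v with | none => .root _ | some p => .tright p)
  | _, .dchild v => some (match parent v with | none => .root _ | some p => .dchild p)

/-- Which argument of its parent a vertex is (false = left, true = right);
only meaningful when the parent is a tensor. -/
def sideOf : {S : Shape A} → Vtx S → Bool
  | _, .root _ => false
  | _, .tleft v => match v with
    | .root _ => false
    | w => sideOf w
  | _, .tright v => match v with
    | .root _ => true
    | w => sideOf w
  | _, .dchild v => match v with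
    | .root _ => false
    | w => sideOf w

end Shape

open Shape

/-- A cut sequent: a family of shapes (the sequent proper) together with a
family of cut pairs, the cut pair at `j` consisting of `cuts j` and its dual,
joined by a cut edge between their roots.  A plain sequent is the case where
the cut index type `κ` is empty. -/
structure CutSeq (A : Type) where
  ι : Type
  main : ι → Shape A
  κ : Type
  cuts : κ → Shape A

namespace CutSeq

variable {A : Type}

/-- The vertices of (the parse forest of) a cut sequent. -/
def Vt (Γ : CutSeq A) : Type :=
  (Σ i : Γ.ι, Vtx (Γ.main i)) ⊕ (Σ j : Γ.κ, (Vtx (Γ.cuts j) ⊕ Vtx (Shape.dual (Γ.cuts j))))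

variable {Γ : CutSeq A}

def sgn : Γ.Vt → Bool
  | .inl ⟨_, v⟩ => vsign v
  | .inr ⟨_, .inl v⟩ => vsign v
  | .inr ⟨_, .inr v⟩ => vsign v

def shapeAt : Γ.Vt → Shape A
  | .inl ⟨_, v⟩ => subtreeAt v
  | .inr ⟨_, .inl v⟩ => subtreeAt v
  | .inr ⟨_, .inr v⟩ => subtreeAt v

def leaf (v : Γ.Vt) : Prop := IsAtom (shapeAt v)
def unitLeaf (v : Γ.Vt) : Prop := shapeAt v = Shape.unit
def lblAt (v : Γ.Vt) : Option A := lblSh (shapeAt v)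

def par : Γ.Vt → Option Γ.Vt
  | .inl ⟨i, v⟩ => (parent v).map fun p => .inl ⟨i, p⟩
  | .inr ⟨j, .inl v⟩ => (parent v).map fun p => .inr ⟨j, .inl p⟩
  | .inr ⟨j, .inr v⟩ => (parent v).map fun p => .inr ⟨j, .inr p⟩

def side : Γ.Vt → Bool
  | .inl ⟨_, v⟩ => sideOf v
  | .inr ⟨_, .inl v⟩ => sideOf v
  | .inr ⟨_, .inr v⟩ => sideOf v

/-- Switched vertices: negative tensors (one argument edge is deleted in a switching). -/
def switched (v : Γ.Vt) : Prop := IsTensorSh (shapeAt v) ∧ sgn v = false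

def IsNeg (v : Γ.Vt) : Prop := leaf v ∧ sgn v = false
def IsPos (v : Γ.Vt) : Prop := leaf v ∧ sgn v = true

def NegLeaf (Γ : CutSeq A) : Type := {v : Γ.Vt // IsNeg v}
def PosLeaf (Γ : CutSeq A) : Type := {v : Γ.Vt // IsPos v}

/-- The cut edges, joining the roots of the two shapes of each cut pair. -/
def cutEdge (a b : Γ.Vt) : Prop :=
  ∃ j : Γ.κ, a = .inr ⟨j, .inl (Vtx.root _)⟩ ∧ b = .inr ⟨j, .inr (Vtx.root _)⟩

/-- A lax leaf function: every negative leaf gets an edge; edges from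
generator-labelled leaves must target positive leaves, edges from negative
unit leaves may target arbitrary vertices. -/
structure LaxLF (Γ : CutSeq A) where
  f : NegLeaf Γ → Γ.Vt
  gen_ok : ∀ v : NegLeaf Γ, ¬ unitLeaf v.1 → IsPos (f v)

/-- Standard leaf functions: every edge targets a positive leaf. -/
def IsStandard (L : LaxLF Γ) : Prop := ∀ v, IsPos (L.f v)

/-- The switching determined by `σ`: delete the argument edge on the
non-chosen side of every negative tensor; keep parse edges, cut edges and
the (undirected) edges of the leaf function. -/
def switchGraph (L : LaxLF Γ) (σ : Γ.Vt → Bool) : SimpleGraph Γ.Vt :=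
  SimpleGraph.fromRel fun a b =>
    (par a = some b ∧ (switched b → σ b = side a)) ∨ cutEdge a b ∨
      ∃ h : IsNeg a, L.f ⟨a, h⟩ = b

/-- The switching criterion: every switching is a tree. -/
def SwitchOK (L : LaxLF Γ) : Prop := ∀ σ : Γ.Vt → Bool, (switchGraph L σ).IsTree

/-- The matching criterion: the restriction of the leaf function to
`a`-labelled leaves is a label-preserving bijection, for each generator `a`. -/
def Matching (L : LaxLF Γ) : Prop :=
  (∀ (v : NegLeaf Γ) (a : A), lblAt v.1 = some a → lblAt (L.f v) = some a) ∧
  (∀ v w : NegLeaf Γ, ¬ unitLeaf v.1 → ¬ unitLeaf w.1 → L.f v = L.f w → v = w) ∧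
  (∀ (w : PosLeaf Γ) (a : A), lblAt w.1 = some a →
      ∃ v : NegLeaf Γ, ¬ unitLeaf v.1 ∧ L.f v = w.1)

/-- A lax linking: a lax leaf function satisfying matching and the switching criterion. -/
def IsLaxLink (L : LaxLF Γ) : Prop := Matching L ∧ SwitchOK L

/-- A (standard) linking. -/
def IsLink (L : LaxLF Γ) : Prop := IsLaxLink L ∧ IsStandard L

/-- Similarity (Trimble rewiring): two lax linkings differing only in the
target of one edge from a negative unit leaf. -/
def Similar (L L' : LaxLF Γ) : Prop :=
  IsLaxLink L ∧ IsLaxLink L' ∧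
  ∃ u : NegLeaf Γ, unitLeaf u.1 ∧ ∀ v : NegLeaf Γ, v ≠ u → L.f v = L'.f v

/-- Lax equivalence: chains of similar lax linkings. -/
def LaxEquiv : LaxLF Γ → LaxLF Γ → Prop := Relation.ReflTransGen Similar

def StdSimilar (L L' : LaxLF Γ) : Prop := Similar L L' ∧ IsStandard L ∧ IsStandard L'

/-- Standard equivalence: chains of similar standard linkings. -/
def StdEquiv : LaxLF Γ → LaxLF Γ → Prop := Relation.ReflTransGen StdSimilar

end CutSeq

open CutSeq

/-- The (cut-free) sequent `S^⊥, T` encoding a two-sided linking `S → T`. -/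
def two {A : Type} (S T : Shape A) : CutSeq A where
  ι := Bool
  main := fun b => match b with
    | false => Shape.dual S
    | true => T
  κ := Empty
  cuts := fun j => j.elim

end Nets

namespace Nets

open Shape CutSeq

variable {A : Type} {Γ : CutSeq A}

/-- Re-target the edge from the negative leaf `l` to point at `t` instead.
(Legitimate when `t` is a positive leaf, or when `l` is a unit leaf.) -/
noncomputable def retarget (L : LaxLF Γ) (l : NegLeaf Γ) (t : Γ.Vt)
    (ht : IsPos t ∨ unitLeaf l.1) : LaxLF Γ where
  f v := if v = l then t else L.f v
  gen_ok v hv := by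
    by_cases hvl : v = l
    · subst hvl
      simp only [if_pos rfl]
      rcases ht with h1 | h2
      · exact h1
      · exact absurd h2 hv
    · simp only [if_neg hvl]; exact L.gen_ok v hv

/-- Re-target the edge from a negative unit leaf. -/
noncomputable def retargetU (L : LaxLF Γ) (l : NegLeaf Γ) (hu : unitLeaf l.1) (t : Γ.Vt) : LaxLF Γ :=
  retarget L l t (Or.inr hu)

/-- The undirected edges of `L` other than the edge from `l`. -/
def fPath (L : LaxLF Γ) (l : NegLeaf Γ) : Γ.Vt → Γ.Vt → Prop :=
  fun a b => ∃ n : NegLeaf Γ, n ≠ l ∧ ((a = n.1 ∧ b = L.f n) ∨ (b = n.1 ∧ a = L.f n))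

end Nets


namespace Nets

open Shape CutSeq SimpleGraph

section Aux

lemma tree_swap.aux {V : Type*} {G : SimpleGraph V} {x y : V} :
    ∀ {v u : V} (_ : G.Walk v u),
      (G \ fromEdgeSet {s(x,y)}).Reachable v x ∨
      (G \ fromEdgeSet {s(x,y)}).Reachable v y ∨
      (G \ fromEdgeSet {s(x,y)}).Reachable v u := by
  intro v u p
  induction p with
  | nil => exact Or.inr (Or.inr (Reachable.refl _))
  | cons hab p ih =>
    rename_i a b c
    by_cases he : s(a,b) = s(x,y)
    · rw [Sym2.eq_iff] at he
      rcases he with ⟨rfl, rfl⟩ | ⟨rfl, rfl⟩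
      · exact Or.inl (Reachable.refl _)
      · exact Or.inr (Or.inl (Reachable.refl _))
    · have hH : (G \ fromEdgeSet {s(x,y)}).Adj a b := by
        rw [sdiff_adj]
        exact ⟨hab, by simp [he]⟩
      rcases ih with h | h | h
      · exact Or.inl (hH.reachable.trans h)
      · exact Or.inr (Or.inl (hH.reachable.trans h))
      · exact Or.inr (Or.inr (hH.reachable.trans h))

lemma tree_swap {V : Type*} {G : SimpleGraph V} (hG : G.IsTree) {x y z : V}
    (hxy : G.Adj x y)
    (hyz : (G \ fromEdgeSet {s(x,y)}).Reachable y z)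
    (hxz : x ≠ z) :
    ((G \ fromEdgeSet {s(x,y)}) ⊔ fromEdgeSet {s(x,z)}).IsTree := by
  set H : SimpleGraph V := G \ fromEdgeSet {s(x,y)} with hH
  set G' : SimpleGraph V := H ⊔ fromEdgeSet {s(x,z)} with hG'
  have hbridge : ¬ H.Reachable x y := by
    have := (isAcyclic_iff_forall_adj_isBridge.mp hG.IsAcyclic) hxy
    exact isBridge_iff.mp this
  have hHG : H ≤ G := sdiff_le
  have hadjxz : G'.Adj x z := Or.inr (by simp [hxz])
  -- every vertex reaches x or y in H
  have hcomp : ∀ v : V, H.Reachable v x ∨ H.Reachable v y := by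
    intro v
    obtain ⟨p⟩ := hG.isConnected.preconnected v x
    rcases tree_swap.aux (x := x) (y := y) p with h | h | h
    · exact Or.inl h
    · exact Or.inr h
    · exact Or.inl h
  have hHle : H ≤ G' := le_sup_left
  have hyx' : G'.Reachable y x :=
    ((Reachable.mono hHle hyz).trans hadjxz.symm.reachable)
  have hconn : G'.Connected := by
    rw [connected_iff]
    refine ⟨fun u v => ?_, ⟨x⟩⟩
    have key : ∀ w : V, G'.Reachable w x := by
      intro w
      rcases hcomp w with h | h
      · exact Reachable.mono hHle h
      · exact (Reachable.mono hHle h).trans hyx'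
    exact (key u).trans (key v).symm
  refine ⟨hconn, ?_⟩
  intro v c hc
  by_cases hmem : s(x,z) ∈ c.edges
  · -- s(x,z) is a bridge of G'
    have hb : G'.IsBridge s(x,z) := by
      rw [isBridge_iff]
      intro hr
      have hle : (G' \ fromEdgeSet {s(x,z)}) ≤ H := by
        intro a b hab
        rw [sdiff_adj, hG', sup_adj] at hab
        rcases hab with ⟨h1 | h1, h2⟩
        · exact h1
        · exact absurd h1 h2
      exact hbridge ((hr.mono hle).trans hyz.symm)
    have h2 := fun (c' : G'.Walk v v) (hc' : c'.IsCycle) => hb.notMem_edges_of_isCycle hc'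
    exact h2 c hc hmem
  · -- cycle avoids s(x,z), so it's a cycle in G
    have hsub : ∀ e ∈ c.edges, e ∈ G.edgeSet := by
      intro e he
      have := c.edges_subset_edgeSet he
      rw [hG', edgeSet_sup] at this
      rcases this with h | h
      · exact edgeSet_mono hHG h
      · rw [edgeSet_fromEdgeSet] at h
        rcases h with ⟨h1, _⟩
        simp only [Set.mem_singleton_iff] at h1
        exact absurd (h1 ▸ he) hmem
    exact hG.IsAcyclic (c.transfer G hsub) (hc.transfer hsub)

variable {A : Type} {Γ : CutSeq A}

lemma parent_not_atom : ∀ {S : Shape A} (v p : Vtx S), Shape.parent v = some p → ¬ Shape.IsAtom (Shape.subtreeAt p) := by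
  intro S v
  induction v with
  | root S => intro p h; simp [Shape.parent] at h
  | tleft v ih =>
    intro p h
    simp only [Shape.parent, Option.some.injEq] at h
    subst h
    cases hp : Shape.parent v with
    | none => simp only [hp]; exact fun h => h
    | some q => simp only [hp]; exact ih q hp
  | tright v ih =>
    intro p h
    simp only [Shape.parent, Option.some.injEq] at h
    subst h
    cases hp : Shape.parent v with
    | none => simp only [hp]; exact fun h => h
    | some q => simp only [hp]; exact ih q hp
  | dchild v ih =>
    intro p h
    simp only [Shape.parent, Option.some.injEq] at h
    subst h
    cases hp : Shape.parent v with
    | none => simp only [hp]; exact fun h => h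
    | some q => simp only [hp]; exact ih q hp

lemma par_not_leaf {a b : Γ.Vt} (h : par a = some b) : ¬ leaf b := by
  cases a with
  | inl x =>
    obtain ⟨i, v⟩ := x
    rw [par] at h
    obtain ⟨p, hp, rfl⟩ := Option.map_eq_some_iff.mp h
    exact parent_not_atom v p hp
  | inr x =>
    obtain ⟨j, v⟩ := x
    cases v with
    | inl v =>
      rw [par] at h
      obtain ⟨p, hp, rfl⟩ := Option.map_eq_some_iff.mp h
      exact parent_not_atom v p hp
    | inr v =>
      rw [par] at h
      obtain ⟨p, hp, rfl⟩ := Option.map_eq_some_iff.mp h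
      exact parent_not_atom v p hp

end Aux

end Nets

namespace Nets

open Shape CutSeq

/-- Rewiring preserves correctness through a connected
retarget: if `f` is a (standard) linking on a sequent, `l` a negative
`I`-labelled leaf, and the old target `f(l)` is connected to the new target
`t` by a path of `f`-edges not through `l`, then the retargeted leaf function
still satisfies the switching criterion. -/
theorem statement16 (A : Type) (Γ : CutSeq A) (hκ : IsEmpty Γ.κ)
    (L : LaxLF Γ) (hL : IsLaxLink L) (hstd : IsStandard L)
    (l : NegLeaf Γ) (hu : unitLeaf l.1)
    (t : Γ.Vt) (ht : IsPos t)
    (hconn : Relation.ReflTransGen (fPath L l) (L.f l) t) :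
    SwitchOK (retarget L l t (Or.inl ht)) := by
  classical
  set L' := retarget L l t (Or.inl ht) with hL'
  have hflpos : IsPos (L.f l) := hstd l
  have hcut : ∀ a b : Γ.Vt, ¬ cutEdge a b := by
    rintro a b ⟨j, -, -⟩; exact hκ.elim j
  have hlne_fl : l.1 ≠ L.f l := by
    intro h
    have h1 := l.2.2
    rw [h, hflpos.2] at h1
    exact Bool.noConfusion h1
  have hlt : l.1 ≠ t := by
    intro h
    have h1 := l.2.2
    rw [h, ht.2] at h1
    exact Bool.noConfusion h1
  intro σ
  set G := switchGraph L σ with hGdef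
  have hG : G.IsTree := hL.2 σ
  -- characterization of the relation after retargeting
  have relChar : ∀ a b : Γ.Vt,
      ((par a = some b ∧ (switched b → σ b = side a)) ∨ cutEdge a b ∨
          ∃ h : IsNeg a, L'.f ⟨a, h⟩ = b)
        ↔ (((par a = some b ∧ (switched b → σ b = side a)) ∨ cutEdge a b ∨
              ∃ h : IsNeg a, L.f ⟨a, h⟩ = b) ∧ ¬(a = l.1 ∧ b = L.f l)) ∨
            (a = l.1 ∧ b = t) := by
    intro a b
    by_cases hal : a = l.1
    · subst hal
      have hfl : L'.f l = t := by
        rw [hL']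
        show (if l = l then t else L.f l) = t
        rw [if_pos rfl]
      have e1 : (∃ h : IsNeg l.1, L'.f ⟨l.1, h⟩ = b) ↔ b = t := by
        constructor
        · rintro ⟨h, hb⟩
          have hsub : (⟨l.1, h⟩ : NegLeaf Γ) = l := Subtype.ext rfl
          rw [hsub, hfl] at hb
          exact hb.symm
        · rintro rfl
          refine ⟨l.2, ?_⟩
          rw [show (⟨l.1, l.2⟩ : NegLeaf Γ) = l from Subtype.ext rfl, hfl]
      have e2 : (∃ h : IsNeg l.1, L.f ⟨l.1, h⟩ = b) ↔ b = L.f l := by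
        constructor
        · rintro ⟨h, hb⟩
          have : (⟨l.1, h⟩ : NegLeaf Γ) = l := Subtype.ext rfl
          rw [this] at hb
          exact hb.symm
        · rintro rfl
          exact ⟨l.2, rfl⟩
      have hparf : par l.1 = some b → b ≠ L.f l := by
        intro hp he
        exact par_not_leaf hp (he ▸ hflpos.1)
      rw [e1, e2]
      have hc := hcut l.1 b
      constructor
      · rintro (hP | hC | rfl)
        · exact Or.inl ⟨Or.inl hP, fun hx => hparf hP.1 hx.2⟩
        · exact absurd hC hc
        · exact Or.inr ⟨rfl, rfl⟩
      · rintro (⟨hP | hC | rfl, hne⟩ | ⟨-, rfl⟩)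
        · exact Or.inl hP
        · exact absurd hC hc
        · exact absurd ⟨rfl, rfl⟩ hne
        · exact Or.inr (Or.inr rfl)
    · have e3 : (∃ h : IsNeg a, L'.f ⟨a, h⟩ = b) ↔ (∃ h : IsNeg a, L.f ⟨a, h⟩ = b) := by
        apply exists_congr
        intro h
        have : (⟨a, h⟩ : NegLeaf Γ) ≠ l := fun he => hal (congrArg Subtype.val he)
        simp only [hL', retarget, if_neg this]
        exact iff_of_eq (congrArg (· = b) (if_neg this))
      rw [e3]
      constructor
      · intro h
        exact Or.inl ⟨h, fun hc => hal hc.1⟩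
      · rintro (⟨h, -⟩ | ⟨hc, -⟩)
        · exact h
        · exact absurd hc hal
  -- no edge points into l
  have hnotlL : ∀ a b : Γ.Vt,
      ((par a = some b ∧ (switched b → σ b = side a)) ∨ cutEdge a b ∨
        ∃ h : IsNeg a, L.f ⟨a, h⟩ = b) → b ≠ l.1 := by
    rintro a b (⟨hp, -⟩ | hc | ⟨h, hb⟩) rfl
    · exact par_not_leaf hp l.2.1
    · exact hcut _ _ hc
    · have := (hstd ⟨a, h⟩).2
      rw [hb, l.2.2] at this
      exact Bool.noConfusion this
  -- the graph equality
  have hEq : switchGraph L' σ =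
      (G \ SimpleGraph.fromEdgeSet {s(l.1, L.f l)}) ⊔ SimpleGraph.fromEdgeSet {s(l.1, t)} := by
    ext a b
    simp only [hGdef, switchGraph, SimpleGraph.fromRel_adj, SimpleGraph.sup_adj,
      SimpleGraph.sdiff_adj, SimpleGraph.fromEdgeSet_adj, Set.mem_singleton_iff, Sym2.eq_iff]
    rw [relChar a b, relChar b a]
    have h1 := hnotlL a b
    have h2 := hnotlL b a
    constructor
    · rintro ⟨hab, hrel⟩
      rcases hrel with (⟨hR, hne⟩ | ⟨rfl, rfl⟩) | (⟨hR, hne⟩ | ⟨rfl, rfl⟩)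
      · refine Or.inl ⟨⟨hab, Or.inl hR⟩, ?_⟩
        rintro ⟨(⟨rfl, rfl⟩ | ⟨rfl, rfl⟩), -⟩
        · exact hne ⟨rfl, rfl⟩
        · exact h1 hR rfl
      · exact Or.inr ⟨Or.inl ⟨rfl, rfl⟩, hab⟩
      · refine Or.inl ⟨⟨hab, Or.inr hR⟩, ?_⟩
        rintro ⟨(⟨rfl, rfl⟩ | ⟨rfl, rfl⟩), -⟩
        · exact h2 hR rfl
        · exact hne ⟨rfl, rfl⟩
      · exact Or.inr ⟨Or.inr ⟨rfl, rfl⟩, hab⟩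
    · rintro (⟨⟨hab, hR | hR⟩, hne⟩ | ⟨(⟨rfl, rfl⟩ | ⟨rfl, rfl⟩), hab⟩)
      · refine ⟨hab, Or.inl (Or.inl ⟨hR, ?_⟩)⟩
        rintro ⟨rfl, rfl⟩
        exact hne ⟨Or.inl ⟨rfl, rfl⟩, hab⟩
      · refine ⟨hab, Or.inr (Or.inl ⟨hR, ?_⟩)⟩
        rintro ⟨rfl, rfl⟩
        exact hne ⟨Or.inr ⟨rfl, rfl⟩, hab⟩
      · exact ⟨hab, Or.inl (Or.inr ⟨rfl, rfl⟩)⟩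
      · exact ⟨hab, Or.inr (Or.inr ⟨rfl, rfl⟩)⟩
  -- adjacency of the old edge
  have hxy : G.Adj l.1 (L.f l) := by
    rw [hGdef, switchGraph, SimpleGraph.fromRel_adj]
    exact ⟨hlne_fl, Or.inl (Or.inr (Or.inr ⟨l.2, rfl⟩))⟩
  -- reachability of the new target avoiding the old edge
  have hyz : (G \ SimpleGraph.fromEdgeSet {s(l.1, L.f l)}).Reachable (L.f l) t := by
    have step : ∀ a b : Γ.Vt, fPath L l a b →
        (G \ SimpleGraph.fromEdgeSet {s(l.1, L.f l)}).Adj a b := by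
      rintro a b ⟨n, hnl, hcase⟩
      have hbase : (G \ SimpleGraph.fromEdgeSet {s(l.1, L.f l)}).Adj n.1 (L.f n) := by
        have hpos := hstd n
        have hne : n.1 ≠ L.f n := by
          intro h
          have h1 := n.2.2
          rw [h, hpos.2] at h1
          exact Bool.noConfusion h1
        rw [SimpleGraph.sdiff_adj]
        constructor
        · rw [hGdef, switchGraph, SimpleGraph.fromRel_adj]
          exact ⟨hne, Or.inl (Or.inr (Or.inr ⟨n.2, rfl⟩))⟩
        · rw [SimpleGraph.fromEdgeSet_adj]
          rintro ⟨he, -⟩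
          rw [Set.mem_singleton_iff, Sym2.eq_iff] at he
          rcases he with ⟨h1, -⟩ | ⟨-, h2⟩
          · exact hnl (Subtype.ext h1)
          · have h3 := (hstd n).2
            rw [h2, l.2.2] at h3
            exact Bool.noConfusion h3
      rcases hcase with ⟨rfl, rfl⟩ | ⟨rfl, rfl⟩
      · exact hbase
      · exact hbase.symm
    have hreach : ∀ c : Γ.Vt, Relation.ReflTransGen (fPath L l) (L.f l) c →
        (G \ SimpleGraph.fromEdgeSet {s(l.1, L.f l)}).Reachable (L.f l) c := by
      intro c hc
      induction hc with
      | refl => exact SimpleGraph.Reachable.refl _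
      | tail h1 h2 ih => exact ih.trans (step _ _ h2).reachable
    exact hreach t hconn
  rw [hEq]
  exact tree_swap hG hxy hyz hlt


end Nets
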